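/- (Brickman's theorem.) Let n ≥ 3 and let Q₁ and Q₂ be real symmetric n×n matrices. Then the image of the Euclidean unit sphere under the pair of quadratic forms, i.e. the set { (xᵀQ₁x, xᵀQ₂x) ∈ ℝ² : x ∈ ℝⁿ, ‖x‖₂ = 1 }, is a convex subset of ℝ². -/

import Mathlib

open scoped RealInnerProductSpace
open Matrix Finset

namespace BrickmanAux

variable {n : ℕ}

def Zset (lam : Fin n → ℝ) : Set (EuclideanSpace ℝ (Fin n)) :=
  {x | ∑ i, x i ^ 2 = 1 ∧ ∑ i, lam i * x i ^ 2 = 0}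

def onSimp (lam : Fin n → ℝ) (p : Fin n → ℝ) : Prop :=
  (∀ i, 0 ≤ p i) ∧ ∑ i, p i = 1 ∧ ∑ i, lam i * p i = 0

noncomputable def lift (ε p : Fin n → ℝ) : EuclideanSpace ℝ (Fin n) :=
  WithLp.toLp 2 (fun i => ε i * Real.sqrt (p i))

def IsSign (ε : Fin n → ℝ) : Prop := ∀ i, ε i = 1 ∨ ε i = -1

lemma IsSign.sq {ε : Fin n → ℝ} (h : IsSign ε) (i : Fin n) : ε i ^ 2 = 1 := by
  rcases h i with h' | h' <;> rw [h'] <;> norm_num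

lemma lift_mem {lam ε p : Fin n → ℝ} (hε : IsSign ε) (hp : onSimp lam p) :
    lift ε p ∈ Zset lam := by
  have hsq : ∀ i, (lift ε p) i ^ 2 = p i := by
    intro i
    show (ε i * Real.sqrt (p i)) ^ 2 = p i
    rw [mul_pow, hε.sq, Real.sq_sqrt (hp.1 i), one_mul]
  constructor
  · calc ∑ i, (lift ε p) i ^ 2 = ∑ i, p i := by simp [hsq]
      _ = 1 := hp.2.1
  · calc ∑ i, lam i * (lift ε p) i ^ 2 = ∑ i, lam i * p i := by simp [hsq]
      _ = 0 := hp.2.2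

lemma onSimp_comb {lam p r : Fin n → ℝ} (hp : onSimp lam p) (hr : onSimp lam r)
    {t : ℝ} (h0 : 0 ≤ t) (h1 : t ≤ 1) :
    onSimp lam (fun i => (1 - t) * p i + t * r i) := by
  refine ⟨fun i => add_nonneg (mul_nonneg (by linarith) (hp.1 i)) (mul_nonneg h0 (hr.1 i)), ?_, ?_⟩
  · rw [Finset.sum_add_distrib, ← Finset.mul_sum, ← Finset.mul_sum, hp.2.1, hr.2.1]; ring
  · have : ∑ i, lam i * ((1 - t) * p i + t * r i)
        = (1 - t) * ∑ i, lam i * p i + t * ∑ i, lam i * r i := by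
      rw [Finset.mul_sum, Finset.mul_sum, ← Finset.sum_add_distrib]
      exact Finset.sum_congr rfl fun i _ => by ring
    rw [this, hp.2.2, hr.2.2]; ring

lemma joined_lift {lam ε p r : Fin n → ℝ} (hε : IsSign ε) (hp : onSimp lam p)
    (hr : onSimp lam r) : JoinedIn (Zset lam) (lift ε p) (lift ε r) := by
  refine ⟨⟨⟨fun t => lift ε (fun i => (1 - (t : ℝ)) * p i + (t : ℝ) * r i), ?_⟩, ?_, ?_⟩, ?_⟩
  · apply Continuous.comp (PiLp.continuous_toLp 2 (fun _ : Fin n => ℝ))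
    apply continuous_pi
    intro i
    exact continuous_const.mul (Real.continuous_sqrt.comp (by fun_prop))
  · simp only [Set.Icc.coe_zero]
    unfold lift; ext i; norm_num
  · simp only [Set.Icc.coe_one]
    unfold lift; ext i; norm_num
  · intro t
    exact lift_mem hε (onSimp_comb hp hr t.2.1 t.2.2)

def Good (lam : Fin n → ℝ) (i : Fin n) : Prop :=
  (∃ j, j ≠ i ∧ lam j ≤ 0) ∧ (∃ k, k ≠ i ∧ 0 ≤ lam k)

lemma exists_zero_slot {lam : Fin n → ℝ} {i : Fin n} (h : Good lam i) :
    ∃ s, onSimp lam s ∧ s i = 0 := by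
  obtain ⟨⟨j, hj, hlj⟩, ⟨k, hk, hlk⟩⟩ := h
  set t : ℝ := lam k / (lam k - lam j) with ht
  have htr : 0 ≤ t ∧ t ≤ 1 ∧ t * lam j + (1 - t) * lam k = 0 := by
    rcases eq_or_lt_of_le (sub_nonneg.mpr (hlj.trans hlk)) with heq | hlt
    · have h1 : lam j = lam k := by linarith [heq.symm ▸ (rfl : lam k - lam j = lam k - lam j)]
      have h2 : lam k = 0 := le_antisymm (h1 ▸ hlj) hlk
      have h3 : t = 0 := by rw [ht, h2, zero_div]
      rw [h3]; refine ⟨le_refl 0, by norm_num, by rw [h2]; ring⟩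
    · have hne : lam k - lam j ≠ 0 := ne_of_gt hlt
      refine ⟨div_nonneg hlk (le_of_lt hlt), ?_, ?_⟩
      · rw [ht, div_le_one hlt]; linarith
      · have h' : t * (lam k - lam j) = lam k := by rw [ht]; exact div_mul_cancel₀ _ hne
        linear_combination -h'
  refine ⟨fun m => (if m = j then t else 0) + (if m = k then 1 - t else 0), ⟨?_, ?_, ?_⟩, ?_⟩
  · intro m
    have := htr.1; have := htr.2.1
    simp only []
    split_ifs <;> linarith
  · rw [Finset.sum_add_distrib, Finset.sum_ite_eq' Finset.univ j (fun _ => t),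
      Finset.sum_ite_eq' Finset.univ k (fun _ => 1 - t)]
    simp
  · have : ∀ m, lam m * ((if m = j then t else 0) + (if m = k then 1 - t else 0))
        = (if m = j then lam j * t else 0) + (if m = k then lam k * (1 - t) else 0) := by
      intro m; split_ifs with h1 h2 <;> subst_vars <;> ring
    simp only [this]
    rw [Finset.sum_add_distrib, Finset.sum_ite_eq' Finset.univ j (fun _ => lam j * t),
      Finset.sum_ite_eq' Finset.univ k (fun _ => lam k * (1 - t))]
    simp only [Finset.mem_univ, if_true]
    linarith [htr.2.2]
  · simp only []
    rw [if_neg (Ne.symm hj), if_neg (Ne.symm hk)]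
    ring
lemma lift_congr {ε ε' p : Fin n → ℝ} (h : ∀ m, p m ≠ 0 → ε m = ε' m) :
    lift ε p = lift ε' p := by
  ext m
  show ε m * Real.sqrt (p m) = ε' m * Real.sqrt (p m)
  by_cases hm : p m = 0
  · rw [hm, Real.sqrt_zero, mul_zero, mul_zero]
  · rw [h m hm]

lemma flip_one {lam ε ε' p : Fin n → ℝ} {i : Fin n} (hε : IsSign ε) (hε' : IsSign ε')
    (hp : onSimp lam p) (hg : Good lam i) (hee : ∀ m, m ≠ i → ε m = ε' m) :
    JoinedIn (Zset lam) (lift ε p) (lift ε' p) := by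
  obtain ⟨s, hs, hsi⟩ := exists_zero_slot hg
  have h1 : JoinedIn (Zset lam) (lift ε p) (lift ε s) := joined_lift hε hp hs
  have h2 : lift ε s = lift ε' s := by
    apply lift_congr
    intro m hm
    exact hee m (fun h => hm (h ▸ hsi))
  have h3 : JoinedIn (Zset lam) (lift ε' s) (lift ε' p) := joined_lift hε' hs hp
  exact (h2 ▸ h1).trans h3

lemma multiflip {lam p : Fin n → ℝ} (hp : onSimp lam p) (D : Finset (Fin n))
    (hD : ∀ i ∈ D, Good lam i) :
    ∀ ε ε' : Fin n → ℝ, IsSign ε → IsSign ε' → (∀ i, ε i ≠ ε' i → i ∈ D) →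
    JoinedIn (Zset lam) (lift ε p) (lift ε' p) := by
  induction D using Finset.induction_on with
  | empty =>
    intro ε ε' hε hε' hdiff
    have : ε = ε' := funext fun i => by_contra fun h => absurd (hdiff i h) (Finset.notMem_empty i)
    rw [this]
    exact JoinedIn.refl (lift_mem hε' hp)
  | @insert a D' ha IH =>
    intro ε ε' hε hε' hdiff
    set ε'' := Function.update ε a (ε' a) with hε''def
    have hε''s : IsSign ε'' := by
      intro m
      by_cases hm : m = a
      · subst hm; rw [hε''def, Function.update_self]; exact hε' m
      · rw [hε''def, Function.update_of_ne hm]; exact hε m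
    have h1 : JoinedIn (Zset lam) (lift ε p) (lift ε'' p) :=
      flip_one hε hε''s hp (hD a (Finset.mem_insert_self a D'))
        (fun m hm => (Function.update_of_ne hm _ _).symm)
    have h2 : JoinedIn (Zset lam) (lift ε'' p) (lift ε' p) := by
      apply IH (fun i hi => hD i (Finset.mem_insert_of_mem hi)) ε'' ε' hε''s hε'
      intro i hi
      by_cases hia : i = a
      · subst hia
        exact absurd (Function.update_self i (ε' i) ε) hi
      · have hne : ε i ≠ ε' i := by rwa [hε''def, Function.update_of_ne hia] at hi
        rcases Finset.mem_insert.mp (hdiff i hne) with h | h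
        · exact absurd h hia
        · exact h
    exact h1.trans h2
lemma neg_mem_Zset {lam : Fin n → ℝ} {x : EuclideanSpace ℝ (Fin n)} (hx : x ∈ Zset lam) :
    -x ∈ Zset lam := by
  have h : ∀ i, (-x) i ^ 2 = x i ^ 2 := fun i => by
    show (-(x i)) ^ 2 = x i ^ 2; ring
  constructor
  · rw [show ∑ i, (-x) i ^2 = ∑ i, x i ^2 from Finset.sum_congr rfl fun i _ => h i]; exact hx.1
  · rw [show ∑ i, lam i * (-x) i ^2 = ∑ i, lam i * x i ^2 from
      Finset.sum_congr rfl fun i _ => by rw [h i]]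
    exact hx.2

lemma joined_neg {lam : Fin n → ℝ} {a b : EuclideanSpace ℝ (Fin n)}
    (h : JoinedIn (Zset lam) a b) : JoinedIn (Zset lam) (-a) (-b) := by
  obtain ⟨γ, hγ⟩ := h
  exact ⟨γ.map continuous_neg, fun t => neg_mem_Zset (hγ t)⟩

lemma not_all_pos {lam : Fin n → ℝ} {x : EuclideanSpace ℝ (Fin n)} (hx : x ∈ Zset lam)
    (h : ∀ i, 0 < lam i) : False := by
  have hterm : ∀ i ∈ Finset.univ, (0:ℝ) ≤ lam i * x i ^ 2 :=
    fun i _ => mul_nonneg (h i).le (sq_nonneg _)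
  have hz := (Finset.sum_eq_zero_iff_of_nonneg hterm).mp hx.2
  have : ∀ i ∈ Finset.univ, x i ^ 2 = 0 := by
    intro i hi
    have := hz i hi
    have hlp := h i
    nlinarith [sq_nonneg (x i)]
  have : ∑ i, x i ^ 2 = 0 := Finset.sum_eq_zero this
  rw [hx.1] at this; norm_num at this

lemma not_all_neg {lam : Fin n → ℝ} {x : EuclideanSpace ℝ (Fin n)} (hx : x ∈ Zset lam)
    (h : ∀ i, lam i < 0) : False := by
  apply not_all_pos (lam := fun i => -lam i) (x := x) ?_ (fun i => by simpa using h i)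
  refine ⟨hx.1, ?_⟩
  have : ∑ i, (fun i => -lam i) i * x i ^2 = -∑ i, lam i * x i ^2 := by
    rw [← Finset.sum_neg_distrib]
    exact Finset.sum_congr rfl fun i _ => by ring
  rw [this, hx.2, neg_zero]

lemma bad_cases {lam : Fin n → ℝ} {i : Fin n} (h : ¬ Good lam i) :
    (∀ j, j ≠ i → 0 < lam j) ∨ (∀ j, j ≠ i → lam j < 0) := by
  by_cases h1 : ∃ j, j ≠ i ∧ lam j ≤ 0
  · right
    have h2 : ¬ ∃ k, k ≠ i ∧ 0 ≤ lam k := fun h2 => h ⟨h1, h2⟩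
    push_neg at h2
    exact fun m hm => h2 m hm
  · left
    push_neg at h1
    exact fun j hj => h1 j hj

lemma exists_third (hn : 3 ≤ n) (i₀ i₁ : Fin n) : ∃ m, m ≠ i₀ ∧ m ≠ i₁ := by
  by_contra hc
  push_neg at hc
  have hsub : (Finset.univ : Finset (Fin n)) ⊆ {i₀, i₁} := by
    intro m _
    rcases Classical.em (m = i₀) with h | h
    · simp [h]
    · simp [hc m h]
  have := Finset.card_le_card hsub
  simp only [Finset.card_univ, Fintype.card_fin] at this
  have h2 : ({i₀, i₁} : Finset (Fin n)).card ≤ 2 :=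
    (Finset.card_insert_le _ _).trans (by simp)
  omega

lemma at_most_one_bad (hn : 3 ≤ n) {lam : Fin n → ℝ} {x : EuclideanSpace ℝ (Fin n)}
    (hx : x ∈ Zset lam) {i₀ i₁ : Fin n} (h₀ : ¬ Good lam i₀) (h₁ : ¬ Good lam i₁) :
    i₀ = i₁ := by
  by_contra hne
  obtain ⟨m, hm0, hm1⟩ := exists_third hn i₀ i₁
  rcases bad_cases h₀ with hp0 | hn0 <;> rcases bad_cases h₁ with hp1 | hn1
  · exact not_all_pos hx (fun j => if h : j = i₀ then h ▸ hp1 i₀ hne else hp0 j h)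
  · exact absurd (hp0 m hm0) (not_lt.mpr (hn1 m hm1).le)
  · exact absurd (hp1 m hm1) (not_lt.mpr (hn0 m hm0).le)
  · exact not_all_neg hx (fun j => if h : j = i₀ then h ▸ hn1 i₀ hne else hn0 j h)
lemma to_abs (hn : 3 ≤ n) {lam : Fin n → ℝ} {x : EuclideanSpace ℝ (Fin n)}
    (hx : x ∈ Zset lam) :
    JoinedIn (Zset lam) x (lift (fun _ => 1) (fun i => x i ^ 2)) ∨
    JoinedIn (Zset lam) x (lift (fun _ => -1) (fun i => x i ^ 2)) := by
  classical
  set p : Fin n → ℝ := fun i => x i ^ 2 with hp_def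
  have hp : onSimp lam p := ⟨fun i => sq_nonneg _, hx.1, hx.2⟩
  set εA : Fin n → ℝ := fun i => if x i < 0 then -1 else 1 with hεA
  set εB : Fin n → ℝ := fun i => if 0 < x i then 1 else -1 with hεB
  have hεAs : IsSign εA := fun i => by by_cases h : x i < 0 <;> simp [hεA, h]
  have hεBs : IsSign εB := fun i => by by_cases h : 0 < x i <;> simp [hεB, h]
  have hlA : lift εA p = x := by
    ext i
    show εA i * Real.sqrt (x i ^ 2) = x i
    rw [Real.sqrt_sq_eq_abs]
    rcases lt_trichotomy (x i) 0 with h | h | h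
    · simp [hεA, h, abs_of_neg h]
    · simp [hεA, h]
    · simp [hεA, not_lt.mpr h.le, abs_of_pos h]
  have hlB : lift εB p = x := by
    ext i
    show εB i * Real.sqrt (x i ^ 2) = x i
    rw [Real.sqrt_sq_eq_abs]
    rcases lt_trichotomy (x i) 0 with h | h | h
    · simp [hεB, not_lt.mpr h.le, abs_of_neg h]
    · simp [hεB, h]
    · simp [hεB, h, abs_of_pos h]
  by_cases hA : ∀ i ∈ Finset.univ.filter (fun i => x i < 0), Good lam i
  · left
    have := multiflip hp _ hA εA (fun _ => 1) hεAs (fun _ => Or.inl rfl) ?_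
    · rwa [hlA] at this
    · intro i hi
      simp only [Finset.mem_filter, Finset.mem_univ, true_and]
      by_contra hc
      exact hi (by rw [hεA]; simp [hc])
  · right
    push_neg at hA
    obtain ⟨iA, hiA, hbad⟩ := hA
    simp only [Finset.mem_filter, Finset.mem_univ, true_and] at hiA
    have hB : ∀ i ∈ Finset.univ.filter (fun i => 0 < x i), Good lam i := by
      intro i hi
      simp only [Finset.mem_filter, Finset.mem_univ, true_and] at hi
      by_contra hc
      have := at_most_one_bad hn hx hc hbad
      subst this
      exact absurd hiA (not_lt.mpr hi.le)
    have := multiflip hp _ hB εB (fun _ => -1) hεBs (fun _ => Or.inr rfl) ?_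
    · rwa [hlB] at this
    · intro i hi
      simp only [Finset.mem_filter, Finset.mem_univ, true_and]
      by_contra hc
      exact hi (by rw [hεB]; simp [hc])

lemma neg_lift_one (p : Fin n → ℝ) :
    lift (fun _ => -1) p = -(lift (fun _ => 1) p) := by
  ext i
  show (-1 : ℝ) * Real.sqrt (p i) = -((1:ℝ) * Real.sqrt (p i))
  ring

lemma key_connect (hn : 3 ≤ n) {lam : Fin n → ℝ} {u v : EuclideanSpace ℝ (Fin n)}
    (hu : u ∈ Zset lam) (hv : v ∈ Zset lam) :
    JoinedIn (Zset lam) u v ∨ JoinedIn (Zset lam) u (-v) := by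
  have hpu : onSimp lam (fun i => u i ^ 2) := ⟨fun i => sq_nonneg _, hu.1, hu.2⟩
  have hpv : onSimp lam (fun i => v i ^ 2) := ⟨fun i => sq_nonneg _, hv.1, hv.2⟩
  have habs : JoinedIn (Zset lam) (lift (fun _ => 1) (fun i => u i ^ 2))
      (lift (fun _ => 1) (fun i => v i ^ 2)) :=
    joined_lift (fun _ => Or.inl rfl) hpu hpv
  rcases to_abs hn hu with h1 | h1 <;> rcases to_abs hn hv with h2 | h2
  · exact Or.inl (h1.trans (habs.trans h2.symm))
  · right
    rw [neg_lift_one] at h2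
    have h2' := joined_neg h2
    rw [neg_neg] at h2'
    exact h1.trans (habs.trans h2'.symm)
  · right
    rw [neg_lift_one] at h1
    have habs' := joined_neg habs
    have h2' := joined_neg h2
    exact h1.trans (habs'.trans h2'.symm)
  · left
    rw [neg_lift_one] at h1 h2
    have habs' := joined_neg habs
    exact h1.trans (habs'.trans h2.symm)
lemma quad_eq {n : ℕ} {Q : Matrix (Fin n) (Fin n) ℝ} (hQ : Q.IsHermitian)
    (z : EuclideanSpace ℝ (Fin n)) :
    ⟪z, Matrix.toEuclideanLin Q z⟫ =
      ∑ i, hQ.eigenvalues i * (hQ.eigenvectorBasis.repr z i) ^ 2 := by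
  set b := hQ.eigenvectorBasis with hb
  have hsym : (Matrix.toEuclideanLin Q).IsSymmetric := Matrix.isHermitian_iff_isSymmetric.mp hQ
  have happ : ∀ i, Matrix.toEuclideanLin Q (b i) = hQ.eigenvalues i • (b i) := by
    intro i
    have h := hQ.mulVec_eigenvectorBasis i
    ext m
    have := congrFun h m
    simpa [Matrix.toEuclideanLin_apply] using this
  have h1 : ⟪z, Matrix.toEuclideanLin Q z⟫
      = ∑ i, (b.repr z i) * (b.repr (Matrix.toEuclideanLin Q z) i) := by
    rw [← b.repr.inner_map_map z (Matrix.toEuclideanLin Q z), PiLp.inner_apply]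
    exact Finset.sum_congr rfl fun i _ => by simp [mul_comm]
  rw [h1]
  apply Finset.sum_congr rfl
  intro i _
  have h2 : b.repr (Matrix.toEuclideanLin Q z) i = hQ.eigenvalues i * b.repr z i := by
    rw [b.repr_apply_apply, b.repr_apply_apply, ← hsym (b i) z, happ i,
      real_inner_smul_left]
  rw [h2]; ring

lemma sum_sq_eq {n : ℕ} (w : EuclideanSpace ℝ (Fin n)) : ∑ i, w i ^ 2 = ‖w‖ ^ 2 := by
  rw [← real_inner_self_eq_norm_sq, PiLp.inner_apply]
  apply Finset.sum_congr rfl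
  intro i _
  show w i ^2 = w i * w i
  ring

end BrickmanAux

set_option maxHeartbeats 2000000 in
/-- Brickman's theorem: for `n ≥ 3` and real symmetric `n×n` matrices `Q₁, Q₂`, the
image `{(xᵀQ₁x, xᵀQ₂x) : ‖x‖₂ = 1}` of the unit sphere under the pair of quadratic
forms is a convex subset of `ℝ²`. -/
theorem brickman (n : ℕ) (hn : 3 ≤ n)
    (Q₁ Q₂ : Matrix (Fin n) (Fin n) ℝ) (hQ₁ : Q₁ᵀ = Q₁) (hQ₂ : Q₂ᵀ = Q₂) :
    Convex ℝ {p : ℝ × ℝ | ∃ x : EuclideanSpace ℝ (Fin n), ‖x‖ = 1 ∧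
      p = (⟪x, Matrix.toEuclideanLin Q₁ x⟫, ⟪x, Matrix.toEuclideanLin Q₂ x⟫)} := by
  classical
  rintro p ⟨x, hx, rfl⟩ q ⟨y, hy, rfl⟩ s t hs ht hst
  set A₁ := Matrix.toEuclideanLin Q₁ with hA₁def
  set A₂ := Matrix.toEuclideanLin Q₂ with hA₂def
  set a1 : ℝ := ⟪x, A₁ x⟫ with ha1
  set a2 : ℝ := ⟪x, A₂ x⟫ with ha2
  set b1 : ℝ := ⟪y, A₁ y⟫ with hb1
  set b2 : ℝ := ⟪y, A₂ y⟫ with hb2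
  simp only [Set.mem_setOf_eq, Prod.smul_mk, smul_eq_mul, Prod.mk_add_mk]
  by_cases hab : a1 = b1 ∧ a2 = b2
  · refine ⟨x, hx, ?_⟩
    rw [Prod.ext_iff]
    constructor
    · show s * a1 + t * b1 = a1
      rw [← hab.1]; linear_combination a1 * hst
    · show s * a2 + t * b2 = a2
      rw [← hab.2]; linear_combination a2 * hst
  · -- the two plane points differ
    have hD : (b1 - a1)^2 + (b2 - a2)^2 ≠ 0 := by
      intro h
      apply hab
      constructor
      · nlinarith [sq_nonneg (b1-a1), sq_nonneg (b2-a2)]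
      · nlinarith [sq_nonneg (b1-a1), sq_nonneg (b2-a2)]
    set Q : Matrix (Fin n) (Fin n) ℝ :=
      (b2 - a2) • Q₁ - (b1 - a1) • Q₂
        - ((b2 - a2) * a1 - (b1 - a1) * a2) • (1 : Matrix (Fin n) (Fin n) ℝ) with hQdef
    have hQt : Qᵀ = Q := by
      rw [hQdef, Matrix.transpose_sub, Matrix.transpose_sub, Matrix.transpose_smul,
        Matrix.transpose_smul, Matrix.transpose_smul, hQ₁, hQ₂, Matrix.transpose_one]
    have hQH : Q.IsHermitian := by
      rw [Matrix.IsHermitian, Matrix.conjTranspose_eq_transpose_of_trivial, hQt]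
    have hone : ∀ z : EuclideanSpace ℝ (Fin n),
        Matrix.toEuclideanLin (1 : Matrix (Fin n) (Fin n) ℝ) z = z := by
      intro z
      simp [Matrix.toEuclideanLin_apply, Matrix.one_mulVec]
    have qform : ∀ z : EuclideanSpace ℝ (Fin n), ⟪z, Matrix.toEuclideanLin Q z⟫
        = (b2 - a2) * ⟪z, A₁ z⟫ - (b1 - a1) * ⟪z, A₂ z⟫
          - ((b2 - a2) * a1 - (b1 - a1) * a2) * ‖z‖^2 := by
      intro z
      rw [hQdef, map_sub, map_sub, _root_.map_smul, _root_.map_smul, _root_.map_smul,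
        LinearMap.sub_apply, LinearMap.sub_apply, LinearMap.smul_apply,
        LinearMap.smul_apply, LinearMap.smul_apply,
        inner_sub_right, inner_sub_right, real_inner_smul_right, real_inner_smul_right,
        real_inner_smul_right, hone z, real_inner_self_eq_norm_sq, hA₁def, hA₂def]
    have hmemZ : ∀ z : EuclideanSpace ℝ (Fin n), ‖z‖ = 1 →
        (b2-a2) * ⟪z, A₁ z⟫ - (b1-a1) * ⟪z, A₂ z⟫ - ((b2-a2)*a1 - (b1-a1)*a2) = 0 →
        hQH.eigenvectorBasis.repr z ∈ BrickmanAux.Zset hQH.eigenvalues := by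
      intro z hz hzf
      constructor
      · rw [BrickmanAux.sum_sq_eq, LinearIsometryEquiv.norm_map, hz]; norm_num
      · show ∑ i, hQH.eigenvalues i * (hQH.eigenvectorBasis.repr z) i ^ 2 = 0
        rw [← BrickmanAux.quad_eq hQH z, qform z, hz]
        linarith [hzf]
    have hu : hQH.eigenvectorBasis.repr x ∈ BrickmanAux.Zset hQH.eigenvalues :=
      hmemZ x hx (by ring)
    have hv : hQH.eigenvectorBasis.repr y ∈ BrickmanAux.Zset hQH.eigenvalues := by
      apply hmemZ y hy
      show (b2-a2) * b1 - (b1-a1) * b2 - ((b2-a2)*a1 - (b1-a1)*a2) = 0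
      ring
    have key := BrickmanAux.key_connect hn hu hv
    have main : ∀ y' : EuclideanSpace ℝ (Fin n), ‖y'‖ = 1 → ⟪y', A₁ y'⟫ = b1 →
        ⟪y', A₂ y'⟫ = b2 →
        JoinedIn (BrickmanAux.Zset hQH.eigenvalues)
          (hQH.eigenvectorBasis.repr x) (hQH.eigenvectorBasis.repr y') →
        ∃ z : EuclideanSpace ℝ (Fin n), ‖z‖ = 1 ∧
          ((s*a1 + t*b1 : ℝ), (s*a2 + t*b2 : ℝ)) = (⟪z, A₁ z⟫, ⟪z, A₂ z⟫) := by
      intro y' hy' hy'1 hy'2 hjj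
      obtain ⟨γ, hγ⟩ := hjj
      have hc1 : Continuous fun z : EuclideanSpace ℝ (Fin n) => (⟪z, A₁ z⟫ : ℝ) :=
        continuous_id.inner A₁.continuous_of_finiteDimensional
      have hc2 : Continuous fun z : EuclideanSpace ℝ (Fin n) => (⟪z, A₂ z⟫ : ℝ) :=
        continuous_id.inner A₂.continuous_of_finiteDimensional
      have hsymc : Continuous (hQH.eigenvectorBasis.repr.symm :
          EuclideanSpace ℝ (Fin n) → EuclideanSpace ℝ (Fin n)) :=
        hQH.eigenvectorBasis.repr.symm.continuous
      have hGc : Continuous (fun w : EuclideanSpace ℝ (Fin n) =>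
          (b1 - a1) * ⟪hQH.eigenvectorBasis.repr.symm w, A₁ (hQH.eigenvectorBasis.repr.symm w)⟫
          + (b2 - a2) * ⟪hQH.eigenvectorBasis.repr.symm w,
              A₂ (hQH.eigenvectorBasis.repr.symm w)⟫) :=
        (continuous_const.mul (hc1.comp hsymc)).add (continuous_const.mul (hc2.comp hsymc))
      have hFc : Continuous (fun τ : ℝ =>
          (b1 - a1) * ⟪hQH.eigenvectorBasis.repr.symm (γ.extend τ),
              A₁ (hQH.eigenvectorBasis.repr.symm (γ.extend τ))⟫
          + (b2 - a2) * ⟪hQH.eigenvectorBasis.repr.symm (γ.extend τ),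
              A₂ (hQH.eigenvectorBasis.repr.symm (γ.extend τ))⟫) :=
        hGc.comp γ.continuous_extend
      have hIV := intermediate_value_uIcc (a := (0:ℝ)) (b := 1) hFc.continuousOn
      have hF0 : (b1 - a1) * ⟪hQH.eigenvectorBasis.repr.symm (γ.extend 0),
              A₁ (hQH.eigenvectorBasis.repr.symm (γ.extend 0))⟫
          + (b2 - a2) * ⟪hQH.eigenvectorBasis.repr.symm (γ.extend 0),
              A₂ (hQH.eigenvectorBasis.repr.symm (γ.extend 0))⟫
          = (b1-a1)*a1 + (b2-a2)*a2 := by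
        rw [Path.extend_zero]
        show (b1 - a1) * ⟪hQH.eigenvectorBasis.repr.symm (hQH.eigenvectorBasis.repr x),
              A₁ (hQH.eigenvectorBasis.repr.symm (hQH.eigenvectorBasis.repr x))⟫ + _ = _
        rw [LinearIsometryEquiv.symm_apply_apply]
      have hF1 : (b1 - a1) * ⟪hQH.eigenvectorBasis.repr.symm (γ.extend 1),
              A₁ (hQH.eigenvectorBasis.repr.symm (γ.extend 1))⟫
          + (b2 - a2) * ⟪hQH.eigenvectorBasis.repr.symm (γ.extend 1),
              A₂ (hQH.eigenvectorBasis.repr.symm (γ.extend 1))⟫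
          = (b1-a1)*b1 + (b2-a2)*b2 := by
        rw [Path.extend_one]
        show (b1 - a1) * ⟪hQH.eigenvectorBasis.repr.symm (hQH.eigenvectorBasis.repr y'),
              A₁ (hQH.eigenvectorBasis.repr.symm (hQH.eigenvectorBasis.repr y'))⟫ + _ = _
        rw [LinearIsometryEquiv.symm_apply_apply, hy'1, hy'2]
      have hmem : (b1-a1)*(s*a1+t*b1) + (b2-a2)*(s*a2+t*b2) ∈
          Set.uIcc ((b1-a1)*a1 + (b2-a2)*a2) ((b1-a1)*b1 + (b2-a2)*b2) := by
        have hsub : s = 1 - t := by linarith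
        subst hsub
        rcases le_total ((b1-a1)*a1 + (b2-a2)*a2) ((b1-a1)*b1 + (b2-a2)*b2) with h | h
        · rw [Set.uIcc_of_le h]
          constructor
          · nlinarith [mul_nonneg ht (sub_nonneg.mpr h)]
          · nlinarith [mul_nonneg (by linarith : (0:ℝ) ≤ 1 - t) (sub_nonneg.mpr h)]
        · rw [Set.uIcc_of_ge h]
          constructor
          · nlinarith [mul_nonneg (by linarith : (0:ℝ) ≤ 1 - t) (sub_nonneg.mpr h)]
          · nlinarith [mul_nonneg ht (sub_nonneg.mpr h)]
      rw [hF0, hF1] at hIV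
      obtain ⟨τ, hτ, hFτ⟩ := hIV hmem
      rw [Set.uIcc_of_le (zero_le_one : (0:ℝ) ≤ 1)] at hτ
      have hext : γ.extend τ = γ ⟨τ, hτ⟩ := γ.extend_apply hτ
      have hw : (γ ⟨τ, hτ⟩ : EuclideanSpace ℝ (Fin n)) ∈ BrickmanAux.Zset hQH.eigenvalues :=
        hγ _
      set z : EuclideanSpace ℝ (Fin n) := hQH.eigenvectorBasis.repr.symm (γ ⟨τ, hτ⟩) with hzdef
      have hrz : hQH.eigenvectorBasis.repr z = γ ⟨τ, hτ⟩ := by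
        rw [hzdef]
        exact hQH.eigenvectorBasis.repr.apply_symm_apply _
      have hz1 : ‖z‖ = 1 := by
        have h1 : ‖z‖^2 = 1 := by
          have h2 := hw.1
          rw [BrickmanAux.sum_sq_eq] at h2
          rw [← h2, hzdef, LinearIsometryEquiv.norm_map]
        nlinarith [norm_nonneg z]
      have hzf : ⟪z, Matrix.toEuclideanLin Q z⟫ = 0 := by
        rw [BrickmanAux.quad_eq hQH z]
        have := hw.2
        rw [← hrz] at this
        exact this
      have e1 : (b2-a2) * ⟪z, A₁ z⟫ - (b1-a1) * ⟪z, A₂ z⟫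
          - ((b2-a2)*a1 - (b1-a1)*a2) = 0 := by
        have h3 := (qform z).symm.trans hzf
        rw [hz1] at h3
        linarith [h3]
      have e2 : (b1-a1) * ⟪z, A₁ z⟫ + (b2-a2) * ⟪z, A₂ z⟫
          = (b1-a1)*(s*a1+t*b1) + (b2-a2)*(s*a2+t*b2) := by
        simp only [hext] at hFτ
        exact hFτ
      refine ⟨z, hz1, ?_⟩
      have hq1 : ((b1-a1)^2+(b2-a2)^2) * (⟪z, A₁ z⟫ - (s*a1+t*b1)) = 0 := by
        linear_combination (b2-a2)*e1 + (b1-a1)*e2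
          - (b2-a2)*((b2-a2)*a1-(b1-a1)*a2)*hst
      have hq2 : ((b1-a1)^2+(b2-a2)^2) * (⟪z, A₂ z⟫ - (s*a2+t*b2)) = 0 := by
        linear_combination (-(b1-a1))*e1 + (b2-a2)*e2
          + (b1-a1)*((b2-a2)*a1-(b1-a1)*a2)*hst
      rw [Prod.ext_iff]
      constructor
      · show s*a1 + t*b1 = ⟪z, A₁ z⟫
        rcases mul_eq_zero.mp hq1 with h | h
        · exact absurd h hD
        · linarith
      · show s*a2 + t*b2 = ⟪z, A₂ z⟫
        rcases mul_eq_zero.mp hq2 with h | h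
        · exact absurd h hD
        · linarith
    rcases key with hj | hj
    · exact main y hy rfl rfl hj
    · have hneg : hQH.eigenvectorBasis.repr (-y) = -(hQH.eigenvectorBasis.repr y) := by
        simp
      refine main (-y) (by simpa using hy) ?_ ?_ (by rw [hneg]; exact hj)
      · show ⟪-y, A₁ (-y)⟫ = b1
        rw [map_neg, inner_neg_neg]
      · show ⟪-y, A₂ (-y)⟫ = b2
        rw [map_neg, inner_neg_neg]
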